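/- For every fixed integer k ≥ 2, lim_{n→∞} [Γ(n/2)^k · Γ_k(n/2)^{-1}] / (n/(2π))^{k(k-1)/4} = 1, where Γ_k is the multivariate gamma function. -/

import Mathlib

open Filter

noncomputable def multivariateGamma (k : ℕ) (a : ℝ) : ℝ :=
  Real.pi ^ ((k * (k - 1) : ℝ) / 4) *
    ∏ j ∈ Finset.range k, Real.Gamma (a + (1 - ((j : ℝ) + 1)) / 2)

open Real
lemma rpow_tendsto_one {f : ℝ → ℝ} (hf : Tendsto f atTop (nhds 1)) (c : ℝ) :
    Tendsto (fun x => f x ^ c) atTop (nhds 1) := by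
  have : ContinuousAt (fun y : ℝ => y ^ c) 1 :=
    Real.continuousAt_rpow_const 1 c (Or.inl one_ne_zero)
  simpa [Real.one_rpow, Function.comp_def] using (this.tendsto.comp hf)

lemma tendsto_add_div (c : ℝ) : Tendsto (fun x : ℝ => (x + c) / x) atTop (nhds 1) := by
  have h : Tendsto (fun x : ℝ => 1 + c / x) atTop (nhds (1 + 0)) :=
    tendsto_const_nhds.add (tendsto_const_nhds.div_atTop tendsto_id)
  rw [add_zero] at h
  refine h.congr' ?_
  filter_upwards [eventually_gt_atTop 0] with x hx
  field_simp

lemma tendsto_div_add (c : ℝ) : Tendsto (fun x : ℝ => x / (x + c)) atTop (nhds 1) := by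
  have h := (tendsto_add_div c).inv₀ one_ne_zero
  rw [inv_one] at h
  exact h.congr (fun x => by rw [inv_div])

-- Gautschi-type squeeze for step 1/2
lemma gamma_half_step :
    Tendsto (fun x : ℝ => Gamma (x + 1/2) / (Gamma x * x ^ (1/2 : ℝ))) atTop (nhds 1) := by
  have key : ∀ x : ℝ, 0 < x →
      (x / (x + 1/2)) ^ (1/2 : ℝ) ≤ Gamma (x + 1/2) / (Gamma x * x ^ (1/2 : ℝ)) ∧
      Gamma (x + 1/2) / (Gamma x * x ^ (1/2 : ℝ)) ≤ 1 := by
    intro x hx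
    have hΓx : 0 < Gamma x := Gamma_pos_of_pos hx
    have hxh : (0:ℝ) < x + 1/2 := by linarith
    have hΓxh : 0 < Gamma (x + 1/2) := Gamma_pos_of_pos hxh
    have hden : 0 < Gamma x * x ^ (1/2 : ℝ) := by positivity
    constructor
    · -- lower bound: x * Γ x ≤ Γ(x+1/2) * (x+1/2)^(1/2)
      have h1 : Gamma (x + 1) ≤ Gamma (x + 1/2) ^ (1/2:ℝ) * Gamma (x + 3/2) ^ (1/2:ℝ) := by
        have := Gamma_mul_add_mul_le_rpow_Gamma_mul_rpow_Gamma
          (s := x + 1/2) (t := x + 3/2) (a := 1/2) (b := 1/2) hxh (by linarith)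
          one_half_pos one_half_pos (by norm_num)
        convert this using 2
        ring
      rw [Gamma_add_one hx.ne'] at h1
      have h2 : Gamma (x + 3/2) = (x + 1/2) * Gamma (x + 1/2) := by
        have := Gamma_add_one hxh.ne'
        rw [show x + 1/2 + 1 = x + 3/2 by ring] at this
        exact this
      rw [h2, Real.mul_rpow hxh.le hΓxh.le] at h1
      have hsq : Gamma (x+1/2) ^ (1/2:ℝ) * Gamma (x+1/2) ^ (1/2:ℝ) = Gamma (x+1/2) := by
        rw [← Real.rpow_add hΓxh]; norm_num
      have h1' : x * Gamma x ≤ Gamma (x+1/2) * (x+1/2) ^ (1/2:ℝ) := by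
        calc x * Gamma x ≤ _ := h1
          _ = Gamma (x+1/2) ^ (1/2:ℝ) * Gamma (x+1/2) ^ (1/2:ℝ) * (x+1/2) ^ (1/2:ℝ) := by ring
          _ = Gamma (x+1/2) * (x+1/2) ^ (1/2:ℝ) := by rw [hsq]
      rw [div_rpow hx.le hxh.le, div_le_div_iff₀ (by positivity) hden]
      calc x ^ (1/2:ℝ) * (Gamma x * x ^ (1/2:ℝ))
          = (x ^ (1/2:ℝ) * x ^ (1/2:ℝ)) * Gamma x := by ring
        _ = x * Gamma x := by
            rw [← Real.rpow_add hx]; norm_num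
        _ ≤ (x + 1/2) ^ (1/2:ℝ) * Gamma (x + 1/2) := by
            linarith [h1']
        _ = Gamma (x + 1/2) * (x + 1/2) ^ (1/2:ℝ) := by ring
    · -- upper bound: Γ(x+1/2) ≤ Γ x * x^(1/2)
      have h1 : Gamma (x + 1/2) ≤ Gamma x ^ (1/2:ℝ) * Gamma (x + 1) ^ (1/2:ℝ) := by
        have := Gamma_mul_add_mul_le_rpow_Gamma_mul_rpow_Gamma
          (s := x) (t := x + 1) (a := 1/2) (b := 1/2) hx (by linarith)
          one_half_pos one_half_pos (by norm_num)
        convert this using 2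
        ring
      rw [Gamma_add_one hx.ne', Real.mul_rpow hx.le hΓx.le, ← mul_assoc,
        mul_comm (Gamma x ^ (1/2:ℝ)), mul_assoc, ← Real.rpow_add hΓx] at h1
      norm_num at h1
      rw [div_le_one hden]
      linarith [h1]
  have hlow : Tendsto (fun x : ℝ => (x / (x + 1/2)) ^ (1/2:ℝ)) atTop (nhds 1) :=
    rpow_tendsto_one (tendsto_div_add (1/2)) (1/2)
  refine tendsto_of_tendsto_of_tendsto_of_le_of_le' hlow tendsto_const_nhds ?_ ?_
  · filter_upwards [eventually_gt_atTop 0] with x hx using (key x hx).1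
  · filter_upwards [eventually_gt_atTop 0] with x hx using (key x hx).2

lemma gamma_half_pow (j : ℕ) :
    Tendsto (fun x : ℝ => Gamma (x + (j:ℝ)/2) / (Gamma x * x ^ ((j:ℝ)/2))) atTop (nhds 1) := by
  induction j with
  | zero =>
      refine tendsto_const_nhds.congr' ?_
      filter_upwards [eventually_gt_atTop 0] with x hx
      have : Gamma x ≠ 0 := (Gamma_pos_of_pos hx).ne'
      simp [Real.rpow_zero, this]
  | succ j ih =>
      have hshift : Tendsto (fun x : ℝ =>
          Gamma (x + (j:ℝ)/2 + 1/2) / (Gamma (x + (j:ℝ)/2) * (x + (j:ℝ)/2) ^ (1/2:ℝ)))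
          atTop (nhds 1) :=
        gamma_half_step.comp (tendsto_atTop_add_const_right atTop ((j:ℝ)/2) tendsto_id)
      have hthird : Tendsto (fun x : ℝ => ((x + (j:ℝ)/2) / x) ^ (1/2:ℝ)) atTop (nhds 1) :=
        rpow_tendsto_one (tendsto_add_div ((j:ℝ)/2)) (1/2)
      have hmul := (ih.mul hshift).mul hthird
      rw [mul_one, mul_one] at hmul
      refine hmul.congr' ?_
      filter_upwards [eventually_gt_atTop 0] with x hx
      have hxj : (0:ℝ) < x + (j:ℝ)/2 := by positivity
      have hΓx : Gamma x ≠ 0 := (Gamma_pos_of_pos hx).ne'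
      have hΓxj : Gamma (x + (j:ℝ)/2) ≠ 0 := (Gamma_pos_of_pos hxj).ne'
      have hxph : (x:ℝ) ^ ((j:ℝ)/2) ≠ 0 := (rpow_pos_of_pos hx _).ne'
      have hxjh : (x + (j:ℝ)/2) ^ (1/2:ℝ) ≠ 0 := (rpow_pos_of_pos hxj _).ne'
      have e1 : x ^ (((j:ℕ)+1:ℝ)/2) = x ^ ((j:ℝ)/2) * x ^ (1/2:ℝ) := by
        rw [← Real.rpow_add hx]; push_cast; ring_nf
      have e2 : ((x + (j:ℝ)/2) / x) ^ (1/2:ℝ) = (x + (j:ℝ)/2) ^ (1/2:ℝ) / x ^ (1/2:ℝ) :=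
        div_rpow hxj.le hx.le _
      have e3 : x + ((j:ℕ)+1:ℝ)/2 = x + (j:ℝ)/2 + 1/2 := by push_cast; ring
      have hxh2 : x ^ (1/2:ℝ) ≠ 0 := (rpow_pos_of_pos hx _).ne'
      push_cast
      rw [e3, e1, e2]
      field_simp

lemma gamma_ratio_shift (j : ℕ) :
    Tendsto (fun x : ℝ => Gamma x / (Gamma (x - (j:ℝ)/2) * x ^ ((j:ℝ)/2))) atTop (nhds 1) := by
  set c : ℝ := (j:ℝ)/2 with hc
  have h1 : Tendsto (fun x : ℝ => Gamma (x - c + c) / (Gamma (x - c) * (x - c) ^ c))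
      atTop (nhds 1) :=
    (gamma_half_pow j).comp (tendsto_atTop_add_const_right atTop (-c) tendsto_id)
  have h2 : Tendsto (fun x : ℝ => ((x + -c) / x) ^ c) atTop (nhds 1) :=
    rpow_tendsto_one (tendsto_add_div (-c)) c
  have hmul := h1.mul h2
  rw [mul_one] at hmul
  refine hmul.congr' ?_
  filter_upwards [eventually_gt_atTop (max 0 c)] with x hx
  have hx0 : 0 < x := lt_of_le_of_lt (le_max_left _ _) hx
  have hxc : 0 < x - c := by have := lt_of_le_of_lt (le_max_right 0 c) hx; linarith
  have hΓxc : Gamma (x - c) ≠ 0 := (Gamma_pos_of_pos hxc).ne'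
  have hp1 : (x - c) ^ c ≠ 0 := (rpow_pos_of_pos hxc _).ne'
  have hp2 : x ^ c ≠ 0 := (rpow_pos_of_pos hx0 _).ne'
  have e1 : x - c + c = x := by ring
  have e2 : x + -c = x - c := by ring
  rw [e1, e2, div_rpow hxc.le hx0.le]
  field_simp

open Real
/-- For fixed `k ≥ 2`,
`lim_{n→∞} Γ(n/2)^k Γ_k(n/2)⁻¹ / (n/(2π))^{k(k-1)/4} = 1`. -/
theorem gamma_ratio_asymptotics (k : ℕ) (hk : 2 ≤ k) :
    Tendsto (fun n : ℕ =>
        (Real.Gamma ((n : ℝ) / 2) ^ k / multivariateGamma k ((n : ℝ) / 2)) /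
          ((n : ℝ) / (2 * Real.pi)) ^ ((k * (k - 1) : ℝ) / 4))
      atTop (nhds 1) := by
  set p : ℝ := (k * (k - 1) : ℝ) / 4 with hp
  have hhalf : Tendsto (fun n : ℕ => (n:ℝ)/2) atTop atTop :=
    tendsto_natCast_atTop_atTop.atTop_div_const two_pos
  have hj : ∀ j ∈ Finset.range k, Tendsto (fun n : ℕ =>
      Gamma ((n:ℝ)/2) / (Gamma ((n:ℝ)/2 - (j:ℝ)/2) * ((n:ℝ)/2) ^ ((j:ℝ)/2)))
      atTop (nhds 1) := fun j _ => (gamma_ratio_shift j).comp hhalf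
  have hprod := tendsto_finset_prod (Finset.range k) hj
  rw [Finset.prod_const_one] at hprod
  -- sum of exponents
  have hsum : (∑ j ∈ Finset.range k, (j:ℝ)/2) = p := by
    rw [← Finset.sum_div]
    have h2 : ((∑ j ∈ Finset.range k, j : ℕ) : ℝ) * 2 = (k:ℝ) * ((k:ℝ) - 1) := by
      rw [← Nat.cast_ofNat, ← Nat.cast_mul, Finset.sum_range_id_mul_two,
        Nat.cast_mul, Nat.cast_sub (by omega : 1 ≤ k)]
      norm_num
    push_cast at h2 ⊢
    rw [hp]
    linarith
  refine hprod.congr' ?_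
  filter_upwards [eventually_ge_atTop k, eventually_ge_atTop 1] with n hn hn1
  set a : ℝ := (n:ℝ)/2 with hadef
  clear_value a
  have ha : (0:ℝ) < a := by
    have : (1:ℝ) ≤ (n:ℝ) := by exact_mod_cast hn1
    rw [hadef]; linarith
  have hΓ : ∀ j ∈ Finset.range k, 0 < Gamma (a - (j:ℝ)/2) := by
    intro j hj'
    apply Gamma_pos_of_pos
    rw [Finset.mem_range] at hj'
    have hjn : (j:ℝ) + 1 ≤ (n:ℝ) := by exact_mod_cast Nat.succ_le_of_lt (lt_of_lt_of_le hj' hn)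
    rw [hadef]; linarith
  have hmg : multivariateGamma k a = π ^ p * ∏ j ∈ Finset.range k, Gamma (a - (j:ℝ)/2) := by
    unfold multivariateGamma
    rw [← hp]
    congr 1
    refine Finset.prod_congr rfl fun j _ => ?_
    congr 1
    ring
  have hprodΓ : (∏ j ∈ Finset.range k, Gamma (a - (j:ℝ)/2)) ≠ 0 :=
    (Finset.prod_pos hΓ).ne'
  have hπp : (π:ℝ) ^ p ≠ 0 := (rpow_pos_of_pos pi_pos _).ne'
  have hap : (0:ℝ) < a ^ p := rpow_pos_of_pos ha _
  have hbase : (n:ℝ) / (2 * π) = a / π := by rw [hadef]; field_simp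
  have hΓa : Gamma a ≠ 0 := (Gamma_pos_of_pos ha).ne'
  calc (∏ j ∈ Finset.range k,
          Gamma a / (Gamma (a - (j:ℝ)/2) * a ^ ((j:ℝ)/2)))
      = Gamma a ^ k / ((∏ j ∈ Finset.range k, Gamma (a - (j:ℝ)/2)) * a ^ p) := by
        rw [Finset.prod_div_distrib, Finset.prod_const, Finset.card_range,
          Finset.prod_mul_distrib, ← Real.rpow_sum_of_pos ha, hsum]
    _ = (Gamma a ^ k / multivariateGamma k a) / ((n:ℝ)/(2*π)) ^ p := by
        rw [hmg, hbase, div_rpow ha.le pi_pos.le]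
        set P : ℝ := ∏ j ∈ Finset.range k, Gamma (a - (j:ℝ)/2) with hP
        clear_value P
        field_simp
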